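/- Let $0<q<\infty$ and let $\lambda=(\lambda_k)_{k\in\mathbb{N}}$ be a positive non-increasing sequence with $\sum_{k=1}^\infty \lambda_k^q<\infty$. Then for the diagonal operator $T_\lambda:\ell_\infty(\mathbb{N})\to\ell_q(\mathbb{N})$ and every $n\in\mathbb{N}$, $\sigma_n(T_\lambda,\mathcal{E})=\left(\sum_{k=n+1}^\infty \lambda_k^q\right)^{1/q}$. -/

import Mathlib

/-- Best `n`-term approximation width of the diagonal operator
`T_λ : ℓ_∞ → ℓ_q` (`0 < q < ∞`) with respect to the canonical basis dictionary:
`σ_n = sup_{‖ξ‖_∞ ≤ 1} inf_{|Γ| = n} (∑_{k ∉ Γ} |λ_k ξ_k|^q)^{1/q}`.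
Sequences are indexed by `ℕ = {0, 1, 2, …}` (so `λ_1` corresponds to `l 0`, etc.). -/
noncomputable def sigmaInfQ (q : ℝ) (l : ℕ → ℝ) (n : ℕ) : ℝ :=
  sSup { s : ℝ | ∃ ξ : ℕ → ℂ, (∀ k, ‖ξ k‖ ≤ 1) ∧
    s = sInf { t : ℝ | ∃ Γ : Finset ℕ, Γ.card = n ∧
      t = (∑' k : ℕ, if k ∈ Γ then 0 else ‖(l k : ℂ) * ξ k‖ ^ q) ^ (1 / q) } }

lemma my_finset_sum_le (q : ℝ) (hq : 0 < q) (l : ℕ → ℝ) (hl : ∀ k, 0 < l k)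
    (hmono : Antitone l) (n : ℕ) (Γ : Finset ℕ) (hΓ : Γ.card = n) :
    ∑ k ∈ Γ, l k ^ q ≤ ∑ k ∈ Finset.range n, l k ^ q := by
  have h1 : ∑ k ∈ Γ ∩ Finset.range n, l k ^ q + ∑ k ∈ Γ \ Finset.range n, l k ^ q
      = ∑ k ∈ Γ, l k ^ q := Finset.sum_inter_add_sum_sdiff _ _ _
  have h2 : ∑ k ∈ Finset.range n ∩ Γ, l k ^ q + ∑ k ∈ Finset.range n \ Γ, l k ^ q
      = ∑ k ∈ Finset.range n, l k ^ q := Finset.sum_inter_add_sum_sdiff _ _ _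
  rw [← h1, ← h2, Finset.inter_comm]
  refine add_le_add_right ?_ _
  have hc1 : (Γ \ Finset.range n).card + (Γ ∩ Finset.range n).card = Γ.card :=
    Finset.card_sdiff_add_card_inter _ _
  have hc2 : (Finset.range n \ Γ).card + (Finset.range n ∩ Γ).card = n := by
    rw [Finset.card_sdiff_add_card_inter, Finset.card_range]
  have hc3 : (Γ ∩ Finset.range n).card = (Finset.range n ∩ Γ).card := by
    rw [Finset.inter_comm]
  have hc : (Γ \ Finset.range n).card = (Finset.range n \ Γ).card := by omega
  calc ∑ k ∈ Γ \ Finset.range n, l k ^ q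
      ≤ (Γ \ Finset.range n).card • l n ^ q := by
        refine Finset.sum_le_card_nsmul _ _ _ (fun k hk => ?_)
        have : n ≤ k := by
          have := (Finset.mem_sdiff.mp hk).2
          simpa [Finset.mem_range, not_lt] using this
        exact Real.rpow_le_rpow (hl k).le (hmono this) hq.le
    _ = (Finset.range n \ Γ).card • l n ^ q := by rw [hc]
    _ ≤ ∑ k ∈ Finset.range n \ Γ, l k ^ q := by
        refine Finset.card_nsmul_le_sum _ _ _ (fun k hk => ?_)
        have : k ≤ n := by
          have := (Finset.mem_sdiff.mp hk).1
          have := Finset.mem_range.mp this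
          omega
        exact Real.rpow_le_rpow (hl n).le (hmono this) hq.le

lemma my_tsum_ite_range (f : ℕ → ℝ) (hf0 : ∀ k, 0 ≤ f k) (hf : Summable f) (n : ℕ) :
    (∑' k : ℕ, if k ∈ Finset.range n then 0 else f k) = ∑' k, f (k + n) := by
  have hF : Summable (fun k : ℕ => if k ∈ Finset.range n then 0 else f k) :=
    Summable.of_nonneg_of_le (fun k => by by_cases h : k ∈ Finset.range n <;> simp [h, hf0 k])
      (fun k => by by_cases h : k ∈ Finset.range n <;> simp [h, hf0 k]) hf
  have hs := Summable.sum_add_tsum_nat_add n hF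
  rw [← hs]
  have h1 : ∑ k ∈ Finset.range n, (if k ∈ Finset.range n then (0:ℝ) else f k) = 0 :=
    Finset.sum_eq_zero (fun k hk => if_pos hk)
  have h2 : (∑' k : ℕ, if k + n ∈ Finset.range n then (0:ℝ) else f (k + n)) = ∑' k, f (k+n) :=
    tsum_congr (fun k => by rw [if_neg (by simp [Finset.mem_range])])
  rw [h1, h2, zero_add]

lemma my_tsum_tail_le (q : ℝ) (hq : 0 < q) (l : ℕ → ℝ) (hl : ∀ k, 0 < l k)
    (hmono : Antitone l) (hsum : Summable fun k => l k ^ q) (n : ℕ)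
    (Γ : Finset ℕ) (hΓ : Γ.card = n) :
    (∑' k, l (k + n) ^ q) ≤ ∑' k : ℕ, if k ∈ Γ then 0 else l k ^ q := by
  have hnn : ∀ k, (0:ℝ) ≤ l k ^ q := fun k => Real.rpow_nonneg (hl k).le q
  have hind : Summable (fun k : ℕ => if k ∈ Γ then l k ^ q else 0) :=
    Summable.of_nonneg_of_le (fun k => by by_cases h : k ∈ Γ <;> simp [h, hnn k])
      (fun k => by by_cases h : k ∈ Γ <;> simp [h, hnn k]) hsum
  have hF : Summable (fun k : ℕ => if k ∈ Γ then (0:ℝ) else l k ^ q) :=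
    Summable.of_nonneg_of_le (fun k => by by_cases h : k ∈ Γ <;> simp [h, hnn k])
      (fun k => by by_cases h : k ∈ Γ <;> simp [h, hnn k]) hsum
  have hsplit : ∑ k ∈ Γ, l k ^ q + (∑' k : ℕ, if k ∈ Γ then (0:ℝ) else l k ^ q)
      = ∑' k, l k ^ q := by
    have e1 : (∑' k : ℕ, if k ∈ Γ then l k ^ q else 0) = ∑ k ∈ Γ, l k ^ q := by
      rw [tsum_eq_sum (s := Γ) (fun k hk => if_neg hk)]
      exact Finset.sum_congr rfl (fun k hk => if_pos hk)
    rw [← e1, ← Summable.tsum_add hind hF]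
    exact tsum_congr (fun k => by by_cases h : k ∈ Γ <;> simp [h])
  have htail : ∑ k ∈ Finset.range n, l k ^ q + ∑' k, l (k + n) ^ q = ∑' k, l k ^ q :=
    Summable.sum_add_tsum_nat_add n hsum
  have hfin := my_finset_sum_le q hq l hl hmono n Γ hΓ
  linarith

theorem sigma_diagonal_p_infty
    (q : ℝ) (hq : 0 < q) (l : ℕ → ℝ) (hl : ∀ k, 0 < l k)
    (hmono : Antitone l) (hsum : Summable fun k => l k ^ q) (n : ℕ) :
    sigmaInfQ q l n = (∑' k : ℕ, l (k + n) ^ q) ^ (1 / q) := by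
  classical
  set S : ℝ := ∑' k : ℕ, l (k + n) ^ q with hS
  have hS0 : 0 ≤ S := tsum_nonneg (fun k => Real.rpow_nonneg (hl _).le q)
  set T : ℝ := S ^ (1 / q) with hT
  have hnn : ∀ k, (0:ℝ) ≤ l k ^ q := fun k => Real.rpow_nonneg (hl k).le q
  have hnorm : ∀ (ξ : ℕ → ℂ), (∀ k, ‖ξ k‖ ≤ 1) → ∀ k, ‖(l k : ℂ) * ξ k‖ ^ q ≤ l k ^ q := by
    intro ξ hξ k
    rw [norm_mul, Complex.norm_real, Real.norm_eq_abs, abs_of_pos (hl k)]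
    have : l k * ‖ξ k‖ ≤ l k := mul_le_of_le_one_right (hl k).le (hξ k)
    exact Real.rpow_le_rpow (mul_nonneg (hl k).le (norm_nonneg _)) this hq.le
  -- every element of the outer set is ≤ T
  have upper : ∀ s ∈ { s : ℝ | ∃ ξ : ℕ → ℂ, (∀ k, ‖ξ k‖ ≤ 1) ∧
      s = sInf { t : ℝ | ∃ Γ : Finset ℕ, Γ.card = n ∧
        t = (∑' k : ℕ, if k ∈ Γ then 0 else ‖(l k : ℂ) * ξ k‖ ^ q) ^ (1 / q) } }, s ≤ T := by
    rintro s ⟨ξ, hξ, rfl⟩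
    have hFs : Summable (fun k : ℕ => if k ∈ Finset.range n then (0:ℝ)
        else ‖(l k : ℂ) * ξ k‖ ^ q) := by
      refine Summable.of_nonneg_of_le (fun k => ?_) (fun k => ?_) hsum
      · by_cases h : k ∈ Finset.range n
        · simp [h]
        · rw [if_neg h]; exact Real.rpow_nonneg (norm_nonneg _) q
      · by_cases h : k ∈ Finset.range n
        · simp [h, hnn k]
        · rw [if_neg h]; exact hnorm ξ hξ k
    have hGs : Summable (fun k : ℕ => if k ∈ Finset.range n then (0:ℝ) else l k ^ q) :=
      Summable.of_nonneg_of_le (fun k => by by_cases h : k ∈ Finset.range n <;> simp [h, hnn k])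
        (fun k => by by_cases h : k ∈ Finset.range n <;> simp [h, hnn k]) hsum
    have hle : (∑' k : ℕ, if k ∈ Finset.range n then (0:ℝ) else ‖(l k : ℂ) * ξ k‖ ^ q) ≤ S := by
      have := my_tsum_ite_range (fun k => l k ^ q) hnn hsum n
      rw [hS, ← this]
      refine Summable.tsum_le_tsum (fun k => ?_) hFs hGs
      by_cases h : k ∈ Finset.range n
      · simp [h]
      · rw [if_neg h, if_neg h]; exact hnorm ξ hξ k
    have hmem : ((∑' k : ℕ, if k ∈ Finset.range n then (0:ℝ)
        else ‖(l k : ℂ) * ξ k‖ ^ q) ^ (1 / q)) ∈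
        { t : ℝ | ∃ Γ : Finset ℕ, Γ.card = n ∧
          t = (∑' k : ℕ, if k ∈ Γ then 0 else ‖(l k : ℂ) * ξ k‖ ^ q) ^ (1 / q) } :=
      ⟨Finset.range n, Finset.card_range n, rfl⟩
    have hbdd : BddBelow { t : ℝ | ∃ Γ : Finset ℕ, Γ.card = n ∧
        t = (∑' k : ℕ, if k ∈ Γ then 0 else ‖(l k : ℂ) * ξ k‖ ^ q) ^ (1 / q) } := by
      refine ⟨0, ?_⟩
      rintro t ⟨Γ, hΓ, rfl⟩
      refine Real.rpow_nonneg (tsum_nonneg (fun k => ?_)) _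
      by_cases h : k ∈ Γ
      · simp [h]
      · rw [if_neg h]; exact Real.rpow_nonneg (norm_nonneg _) q
    refine le_trans (csInf_le hbdd hmem) ?_
    refine Real.rpow_le_rpow (tsum_nonneg (fun k => ?_)) hle (by positivity)
    by_cases h : k ∈ Finset.range n
    · simp [h]
    · rw [if_neg h]; exact Real.rpow_nonneg (norm_nonneg _) q
  -- T is in the outer set (via ξ = 1)
  have hTmem : T ∈ { s : ℝ | ∃ ξ : ℕ → ℂ, (∀ k, ‖ξ k‖ ≤ 1) ∧
      s = sInf { t : ℝ | ∃ Γ : Finset ℕ, Γ.card = n ∧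
        t = (∑' k : ℕ, if k ∈ Γ then 0 else ‖(l k : ℂ) * ξ k‖ ^ q) ^ (1 / q) } } := by
    refine ⟨fun _ => 1, fun k => by simp, ?_⟩
    have hone : ∀ k, ‖(l k : ℂ) * (1:ℂ)‖ ^ q = l k ^ q := fun k => by
      rw [mul_one, Complex.norm_real, Real.norm_eq_abs, abs_of_pos (hl k)]
    have hset : { t : ℝ | ∃ Γ : Finset ℕ, Γ.card = n ∧
        t = (∑' k : ℕ, if k ∈ Γ then 0 else ‖(l k : ℂ) * (1:ℂ)‖ ^ q) ^ (1 / q) }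
        = { t : ℝ | ∃ Γ : Finset ℕ, Γ.card = n ∧
        t = (∑' k : ℕ, if k ∈ Γ then 0 else l k ^ q) ^ (1 / q) } := by
      ext t
      constructor <;> rintro ⟨Γ, hΓ, rfl⟩ <;>
        exact ⟨Γ, hΓ, by congr 1; exact tsum_congr (fun k => by rw [hone k])⟩
    rw [hset]
    refine (le_antisymm (csInf_le ⟨0, ?_⟩ ?_) (le_csInf ?_ ?_)).symm
    · rintro t ⟨Γ, hΓ, rfl⟩
      have h0 : (0:ℝ) ≤ ∑' k : ℕ, if k ∈ Γ then (0:ℝ) else l k ^ q :=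
        tsum_nonneg (fun k => by by_cases h : k ∈ Γ <;> simp [h, hnn k])
      exact Real.rpow_nonneg h0 _
    · refine ⟨Finset.range n, Finset.card_range n, ?_⟩
      rw [hT, hS, my_tsum_ite_range (fun k => l k ^ q) hnn hsum n]
    · exact ⟨(∑' k : ℕ, if k ∈ Finset.range n then (0:ℝ) else l k ^ q) ^ (1 / q),
        Finset.range n, Finset.card_range n, rfl⟩
    · rintro t ⟨Γ, hΓ, rfl⟩
      refine Real.rpow_le_rpow hS0 ?_ (by positivity)
      exact my_tsum_tail_le q hq l hl hmono hsum n Γ hΓ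
  unfold sigmaInfQ
  exact le_antisymm (csSup_le ⟨T, hTmem⟩ upper) (le_csSup ⟨T, upper⟩ hTmem)
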